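/- Let m be a positive integer with distinct prime divisors p_1, …, p_k. Then lim_{N→∞} (1/N) ∑_{m|n, n≤N} φ(n)/n = (6/(π² m)) · ∏_{j=1}^k p_j/(1 + p_j). -/

import Mathlib

open Filter Topology Real ArithmeticFunction

private lemma my_totient_div (n : ℕ) (hn : 0 < n) :
    (Nat.totient n : ℝ) / n = ∑ d ∈ n.divisors, (moebius d : ℝ) / d := by
  have H := (sum_eq_iff_sum_mul_moebius_eq
      (f := fun k => (Nat.totient k : ℝ)) (g := fun k => (k : ℝ))).mp
      (fun k _ => by exact_mod_cast Nat.sum_totient k) n hn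
  rw [← H, Nat.sum_divisorsAntidiagonal (f := fun d e => (moebius d : ℝ) * e),
    Finset.sum_div]
  refine Finset.sum_congr rfl fun d hd => ?_
  rw [Nat.mem_divisors] at hd
  obtain ⟨hdvd, hn0⟩ := hd
  have hd0 : d ≠ 0 := by rintro rfl; exact hn0 (Nat.zero_dvd.mp hdvd)
  have hd0' : (d : ℝ) ≠ 0 := Nat.cast_ne_zero.mpr hd0
  have hn0' : (n : ℝ) ≠ 0 := Nat.cast_ne_zero.mpr hn0
  rw [Nat.cast_div hdvd hd0']
  field_simp

private lemma my_card (N L : ℕ) :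
    ((Finset.Icc 1 N).filter (fun n => L ∣ n)).card = N / L := by
  rw [show Finset.Icc 1 N = Finset.Ioc 0 N from Finset.Icc_add_one_left_eq_Ioc 0 N]
  exact Nat.Ioc_filter_dvd_card_eq_div N L

private lemma my_tsum_split (p : ℕ) (hp : 0 < p) (f : ℕ → ℝ) (hf : Summable f) :
    ∑' d, f d = (∑' d, if p ∣ d then 0 else f d) + ∑' e, f (p * e) := by
  classical
  have e1 : ∑' (x : {d : ℕ | p ∣ d}), f x = ∑' e, f (p * e) := by
    have hbij : Function.Bijective
        (fun e : ℕ => (⟨p * e, dvd_mul_right p e⟩ : {d : ℕ | p ∣ d})) := by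
      constructor
      · intro a b hab
        exact mul_left_cancel₀ hp.ne' (congrArg Subtype.val hab)
      · rintro ⟨d, hd⟩
        obtain ⟨k, rfl⟩ := hd
        exact ⟨k, rfl⟩
    exact ((Equiv.ofBijective _ hbij).tsum_eq fun x : {d : ℕ | p ∣ d} => f x).symm
  have e2 : ∑' (x : ({d : ℕ | p ∣ d}ᶜ : Set ℕ)), f x = ∑' d, if p ∣ d then 0 else f d := by
    rw [tsum_subtype]
    refine tsum_congr fun d => ?_
    by_cases h : p ∣ d
    · simp [Set.indicator, h]
    · simp [Set.indicator, h]
  rw [← Summable.tsum_add_tsum_compl (s := {d : ℕ | p ∣ d}) (hf.subtype _) (hf.subtype _), e1, e2,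
    add_comm]

private lemma abs_moebius_le (d : ℕ) : |(moebius d : ℝ)| ≤ 1 := by
  exact_mod_cast (abs_moebius_le_one (n := d))

private lemma summable_moebius_div_sq :
    Summable (fun d : ℕ => (moebius d : ℝ) / d ^ 2) := by
  refine Summable.of_norm_bounded (Real.summable_one_div_nat_pow.mpr one_lt_two) fun d => ?_
  rcases eq_or_ne d 0 with rfl | hd
  · simp
  · have : ‖(moebius d : ℝ) / (d : ℝ) ^ 2‖ = |(moebius d : ℝ)| / (d : ℝ) ^ 2 := by
      rw [Real.norm_eq_abs, abs_div, abs_pow, Nat.abs_cast]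
    rw [this]
    gcongr
    exact abs_moebius_le d

private lemma tsum_moebius_div_sq : ∑' d : ℕ, (moebius d : ℝ) / d ^ 2 = 6 / π ^ 2 := by
  have hpi : (π : ℂ) ≠ 0 := Complex.ofReal_ne_zero.mpr Real.pi_ne_zero
  have hmul := LSeries_zeta_mul_Lseries_moebius (s := 2) (by norm_num)
  rw [LSeries_zeta_eq_riemannZeta (by norm_num), riemannZeta_two] at hmul
  have hL : LSeries (fun n => (moebius n : ℂ)) 2 = 6 / (π : ℂ) ^ 2 := by
    rw [eq_div_iff (pow_ne_zero 2 hpi)]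
    linear_combination 6 * hmul
  have hosum : ((∑' d : ℕ, (moebius d : ℝ) / d ^ 2 : ℝ) : ℂ)
      = LSeries (fun n => (moebius n : ℂ)) 2 := by
    rw [Complex.ofReal_tsum, LSeries]
    refine tsum_congr fun n => ?_
    rcases eq_or_ne n 0 with rfl | hn
    · simp [LSeries.term_def]
    · rw [LSeries.term_def, if_neg hn,
        show (2 : ℂ) = ((2 : ℕ) : ℂ) by norm_num, Complex.cpow_natCast]
      push_cast
      ring
  have h6 : ((6 / π ^ 2 : ℝ) : ℂ) = 6 / (π : ℂ) ^ 2 := by push_cast; ring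
  exact_mod_cast hosum.trans (hL.trans h6.symm)

noncomputable def gg (s : Finset ℕ) (d : ℕ) : ℝ :=
  (moebius d : ℝ) * (∏ q ∈ s ∩ d.primeFactors, (q : ℝ)) / d ^ 2

private lemma gg_summable (s : Finset ℕ) : Summable (gg s) := by
  classical
  refine Summable.of_norm_bounded (g := fun d => (∏ q ∈ s, ((q : ℝ) + 1)) * (1 / (d : ℝ) ^ 2))
    (((Real.summable_one_div_nat_pow.mpr one_lt_two)).mul_left _) fun d => ?_
  have hprodnn : 0 ≤ ∏ q ∈ s ∩ d.primeFactors, (q : ℝ) :=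
    Finset.prod_nonneg fun i _ => Nat.cast_nonneg i
  have hprod : (∏ q ∈ s ∩ d.primeFactors, (q : ℝ)) ≤ ∏ q ∈ s, ((q : ℝ) + 1) := by
    calc (∏ q ∈ s ∩ d.primeFactors, (q : ℝ))
        ≤ ∏ q ∈ s ∩ d.primeFactors, ((q : ℝ) + 1) :=
          Finset.prod_le_prod (fun i _ => Nat.cast_nonneg i)
            (fun i _ => by linarith [Nat.cast_nonneg (α := ℝ) i])
      _ ≤ ∏ q ∈ s, ((q : ℝ) + 1) := by
          rw [← Finset.prod_sdiff (Finset.inter_subset_left (s₁ := s) (s₂ := d.primeFactors))]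
          refine le_mul_of_one_le_left (Finset.prod_nonneg fun i _ => by positivity) ?_
          exact le_trans (Finset.prod_const_one (s := s \ (s ∩ d.primeFactors))).symm.le
            (Finset.prod_le_prod (fun i _ => zero_le_one)
              (fun i _ => by linarith [Nat.cast_nonneg (α := ℝ) i]))
  rcases eq_or_ne d 0 with rfl | hd
  · simp [gg]
  · have hd2 : (0 : ℝ) < (d : ℝ) ^ 2 := by positivity
    rw [gg, Real.norm_eq_abs, abs_div, abs_mul, abs_pow, Nat.abs_cast,
      abs_of_nonneg hprodnn]
    show _ ≤ (∏ q ∈ s, ((q : ℝ) + 1)) * (1 / (d : ℝ) ^ 2)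
    have hnum : |(moebius d : ℝ)| * (∏ q ∈ s ∩ d.primeFactors, (q : ℝ))
        ≤ ∏ q ∈ s, ((q : ℝ) + 1) :=
      le_trans (mul_le_of_le_one_left hprodnn (abs_moebius_le d)) hprod
    calc |(moebius d : ℝ)| * (∏ q ∈ s ∩ d.primeFactors, (q : ℝ)) / (d : ℝ) ^ 2
        ≤ (∏ q ∈ s, ((q : ℝ) + 1)) / (d : ℝ) ^ 2 := by gcongr
      _ = (∏ q ∈ s, ((q : ℝ) + 1)) * (1 / (d : ℝ) ^ 2) := by ring

private lemma gg_eval (s : Finset ℕ) : (∀ p ∈ s, p.Prime) →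
    ∑' d, gg s d = 6 / π ^ 2 * ∏ p ∈ s, (p : ℝ) / (1 + p) := by
  classical
  induction s using Finset.induction_on with
  | empty =>
    intro _
    rw [Finset.prod_empty, mul_one, ← tsum_moebius_div_sq]
    refine tsum_congr fun d => ?_
    rw [gg, Finset.empty_inter, Finset.prod_empty, mul_one]
  | @insert p t hpt ih =>
    intro hs
    have hp : p.Prime := hs p (Finset.mem_insert_self p t)
    have ht : ∀ q ∈ t, q.Prime := fun q hq => hs q (Finset.mem_insert_of_mem hq)
    have hp0 : 0 < p := hp.pos
    have hpR : (0 : ℝ) < p := by exact_mod_cast hp0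
    have hpR' : (p : ℝ) ≠ 0 := hpR.ne'
    -- pointwise identities
    have key1 : ∀ d, ¬ p ∣ d → gg (insert p t) d = gg t d := by
      intro d hd
      have hpd : p ∉ d.primeFactors := fun h => hd (Nat.dvd_of_mem_primeFactors h)
      rw [gg, gg, Finset.insert_inter_of_notMem hpd]
    have hmu0 : ∀ e, p ∣ e → (moebius (p * e) : ℝ) = 0 := by
      intro e hpe
      have hnsq : ¬ Squarefree (p * e) := by
        intro hsq
        exact (hp.coprime_iff_not_dvd.mp (Nat.squarefree_mul_iff.mp hsq).1) hpe
      rw [moebius_eq_zero_of_not_squarefree hnsq, Int.cast_zero]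
    have hpfmul : ∀ e, ¬ p ∣ e → (p * e).primeFactors = insert p e.primeFactors := by
      intro e hpe
      have he0 : e ≠ 0 := fun h => hpe (h ▸ dvd_zero p)
      rw [Nat.primeFactors_mul hp0.ne' he0, Nat.Prime.primeFactors hp, ← Finset.insert_eq]
    have hmumul : ∀ e, ¬ p ∣ e → (moebius (p * e) : ℝ) = -(moebius e : ℝ) := by
      intro e hpe
      rw [isMultiplicative_moebius.map_mul_of_coprime (hp.coprime_iff_not_dvd.mpr hpe),
        moebius_apply_prime hp]
      push_cast; ring
    have key2 : ∀ e, gg t (p * e) = (-(1 / (p : ℝ) ^ 2)) * (if p ∣ e then 0 else gg t e) := by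
      intro e
      by_cases hpe : p ∣ e
      · rw [if_pos hpe, mul_zero, gg, hmu0 e hpe, zero_mul, zero_div]
      · have he0 : e ≠ 0 := fun h => hpe (h ▸ dvd_zero p)
        have he0' : (e : ℝ) ≠ 0 := Nat.cast_ne_zero.mpr he0
        rw [if_neg hpe, gg, gg, hmumul e hpe,
          show t ∩ (p * e).primeFactors = t ∩ e.primeFactors by
            rw [hpfmul e hpe, Finset.inter_insert_of_notMem hpt]]
        push_cast
        ring
    have key3 : ∀ e, gg (insert p t) (p * e) = (-(1 / (p : ℝ))) * (if p ∣ e then 0 else gg t e) := by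
      intro e
      by_cases hpe : p ∣ e
      · rw [if_pos hpe, mul_zero, gg, hmu0 e hpe, zero_mul, zero_div]
      · have he0 : e ≠ 0 := fun h => hpe (h ▸ dvd_zero p)
        have he0' : (e : ℝ) ≠ 0 := Nat.cast_ne_zero.mpr he0
        have hppf : p ∉ t ∩ e.primeFactors := fun h => hpt (Finset.mem_of_mem_inter_left h)
        rw [if_neg hpe, gg, gg, hmumul e hpe,
          show insert p t ∩ (p * e).primeFactors = insert p (t ∩ e.primeFactors) by
            rw [hpfmul e hpe,
              Finset.insert_inter_of_mem (Finset.mem_insert_self p _),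
              Finset.inter_insert_of_notMem hpt],
          Finset.prod_insert hppf]
        push_cast
        field_simp
    -- summability
    have hS : Summable (gg t) := gg_summable t
    have hS' : Summable (gg (insert p t)) := gg_summable (insert p t)
    set A : ℝ := ∑' d, if p ∣ d then 0 else gg t d with hA
    have heq1 : ∑' d, gg t d = A + ∑' e, gg t (p * e) := my_tsum_split p hp0 (gg t) hS
    have heq2 : ∑' e, gg t (p * e) = (-(1 / (p : ℝ) ^ 2)) * A := by
      rw [show (fun e => gg t (p * e)) = fun e => (-(1 / (p : ℝ) ^ 2)) * (if p ∣ e then 0 else gg t e) from funext key2]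
      exact tsum_mul_left
    have heq3 : ∑' d, gg (insert p t) d = A + ∑' e, gg (insert p t) (p * e) := by
      rw [my_tsum_split p hp0 _ hS']
      congr 1
      refine tsum_congr fun d => ?_
      by_cases h : p ∣ d
      · rw [if_pos h, if_pos h]
      · rw [if_neg h, if_neg h, key1 d h]
    have heq4 : ∑' e, gg (insert p t) (p * e) = (-(1 / (p : ℝ))) * A := by
      rw [show (fun e => gg (insert p t) (p * e)) = fun e => (-(1 / (p : ℝ))) * (if p ∣ e then 0 else gg t e) from funext key3]
      exact tsum_mul_left
    have hT : 6 / π ^ 2 * ∏ q ∈ t, (q : ℝ) / (1 + q) = (1 - 1 / (p : ℝ) ^ 2) * A := by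
      rw [← ih ht, heq1, heq2]; ring
    have h1p : (1 : ℝ) + p ≠ 0 := by positivity
    rw [heq3, heq4, Finset.prod_insert hpt]
    calc A + (-(1 / (p : ℝ))) * A = (1 - 1 / (p : ℝ)) * A := by ring
      _ = (p : ℝ) / (1 + p) * ((1 - 1 / (p : ℝ) ^ 2) * A) := by
          field_simp
          ring
      _ = 6 / π ^ 2 * ((p : ℝ) / (1 + p) * ∏ q ∈ t, (q : ℝ) / (1 + q)) := by
          rw [← hT]; ring

private lemma tsum_const_eval (m : ℕ) (hm : 0 < m) :
    ∑' d : ℕ, (moebius d : ℝ) / (d * Nat.lcm m d) =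
      6 / (π ^ 2 * m) * ∏ p ∈ m.primeFactors, (p : ℝ) / (1 + p) := by
  classical
  have hm0 : (m : ℝ) ≠ 0 := Nat.cast_ne_zero.mpr hm.ne'
  have key : ∀ d : ℕ, (moebius d : ℝ) / (d * Nat.lcm m d)
      = (1 / (m : ℝ)) * gg m.primeFactors d := by
    intro d
    by_cases hsq : Squarefree d
    · have hd0 : d ≠ 0 := hsq.ne_zero
      have hd0' : (d : ℝ) ≠ 0 := Nat.cast_ne_zero.mpr hd0
      have hgcd : ((Nat.gcd m d : ℕ) : ℝ) = ∏ q ∈ m.primeFactors ∩ d.primeFactors, (q : ℝ) := by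
        rw [← Nat.cast_prod]
        congr 1
        rw [← Nat.primeFactors_gcd hm.ne' hd0]
        exact (Nat.prod_primeFactors_of_squarefree
          (Squarefree.squarefree_of_dvd (Nat.gcd_dvd_right m d) hsq)).symm
      have hlcm : ((Nat.gcd m d : ℕ) : ℝ) * ((Nat.lcm m d : ℕ) : ℝ) = (m : ℝ) * d := by
        rw [← Nat.cast_mul, Nat.gcd_mul_lcm]
        push_cast; ring
      have hl0 : ((Nat.lcm m d : ℕ) : ℝ) ≠ 0 :=
        Nat.cast_ne_zero.mpr (Nat.lcm_ne_zero hm.ne' hd0)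
      rw [gg, ← hgcd]
      rw [div_eq_iff (by positivity : ((d : ℝ) * (Nat.lcm m d : ℕ) : ℝ) ≠ 0)]
      field_simp
      linear_combination (-1 : ℝ) * hlcm
    · have h0 : (moebius d : ℝ) = 0 := by
        rw [moebius_eq_zero_of_not_squarefree hsq, Int.cast_zero]
      rw [gg, h0, zero_div, zero_mul, zero_div, mul_zero]
  calc ∑' d : ℕ, (moebius d : ℝ) / (d * Nat.lcm m d)
      = ∑' d : ℕ, (1 / (m : ℝ)) * gg m.primeFactors d := tsum_congr key
    _ = (1 / (m : ℝ)) * ∑' d, gg m.primeFactors d := tsum_mul_left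
    _ = 6 / (π ^ 2 * m) * ∏ p ∈ m.primeFactors, (p : ℝ) / (1 + p) := by
        rw [gg_eval m.primeFactors (fun p hp => Nat.prime_of_mem_primeFactors hp)]
        ring

theorem stmt13 (m : ℕ) (hm : 0 < m) :
    Tendsto (fun N : ℕ =>
      (∑ n ∈ (Finset.Icc 1 N).filter (fun n => m ∣ n), (Nat.totient n : ℝ) / n) / N)
      atTop (𝓝 (6 / (π ^ 2 * m) * ∏ p ∈ m.primeFactors, (p : ℝ) / (1 + p))) := by
  classical
  set F : ℕ → ℕ → ℝ :=
    fun N d => (moebius d : ℝ) / d * ((N / Nat.lcm m d : ℕ) : ℝ) / N with hFdef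
  have hL : ∀ d : ℕ, 0 < d → 0 < Nat.lcm m d :=
    fun d hd => Nat.pos_of_ne_zero (Nat.lcm_ne_zero hm.ne' hd.ne')
  have hdL : ∀ d : ℕ, 0 < d → d ≤ Nat.lcm m d :=
    fun d hd => Nat.le_of_dvd (hL d hd) (Nat.dvd_lcm_right m d)
  -- Step 1: identify the averaged sum with a tsum
  have hmain : ∀ N : ℕ, 0 < N →
      (∑ n ∈ (Finset.Icc 1 N).filter (fun n => m ∣ n), (Nat.totient n : ℝ) / n) / N
        = ∑' d, F N d := by
    intro N hN
    have hswap : ∑ n ∈ (Finset.Icc 1 N).filter (fun n => m ∣ n), (Nat.totient n : ℝ) / n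
        = ∑ d ∈ Finset.Icc 1 N, (moebius d : ℝ) / d * ((N / Nat.lcm m d : ℕ) : ℝ) := by
      have h1 : ∑ n ∈ (Finset.Icc 1 N).filter (fun n => m ∣ n), (Nat.totient n : ℝ) / n
          = ∑ n ∈ (Finset.Icc 1 N).filter (fun n => m ∣ n),
              ∑ d ∈ n.divisors, (moebius d : ℝ) / d := by
        refine Finset.sum_congr rfl fun n hn => ?_
        have hn1 := (Finset.mem_Icc.mp (Finset.mem_filter.mp hn).1).1
        exact my_totient_div n (by omega)
      rw [h1, Finset.sum_comm' (s := (Finset.Icc 1 N).filter (fun n => m ∣ n))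
        (t := fun n => n.divisors) (t' := Finset.Icc 1 N)
        (s' := fun d => (Finset.Icc 1 N).filter (fun n => m ∣ n ∧ d ∣ n))
        (fun n d => by
          simp only [Finset.mem_filter, Finset.mem_Icc, Nat.mem_divisors]
          constructor
          · rintro ⟨⟨⟨h1n, hnN⟩, hmn⟩, hdn, hn0⟩
            have hd1 : 0 < d := Nat.pos_of_dvd_of_pos hdn (by omega)
            have hdN : d ≤ N := le_trans (Nat.le_of_dvd (by omega) hdn) hnN
            exact ⟨⟨⟨h1n, hnN⟩, hmn, hdn⟩, hd1, hdN⟩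
          · rintro ⟨⟨⟨h1n, hnN⟩, hmn, hdn⟩, _⟩
            exact ⟨⟨⟨h1n, hnN⟩, hmn⟩, hdn, by omega⟩)]
      refine Finset.sum_congr rfl fun d hd => ?_
      have hfil : (Finset.Icc 1 N).filter (fun n => m ∣ n ∧ d ∣ n)
          = (Finset.Icc 1 N).filter (fun n => Nat.lcm m d ∣ n) := by
        refine Finset.filter_congr fun n _ => ?_
        exact (Nat.lcm_dvd_iff).symm
      rw [Finset.sum_const, hfil, my_card, nsmul_eq_mul, mul_comm]
    rw [hswap, Finset.sum_div, tsum_eq_sum (s := Finset.Icc 1 N)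
      (fun d hd => by
        rw [Finset.mem_Icc] at hd
        push_neg at hd
        rcases Nat.eq_zero_or_pos d with rfl | hd0
        · simp [hFdef]
        · have hNd : N < Nat.lcm m d := lt_of_lt_of_le (hd hd0) (hdL d hd0)
          have hz : N / Nat.lcm m d = 0 := Nat.div_eq_of_lt hNd
          simp [hFdef, hz])]
  -- Step 2: dominated convergence
  have hlim : Tendsto (fun N => ∑' d, F N d) atTop
      (𝓝 (∑' d, (moebius d : ℝ) / (d * Nat.lcm m d))) := by
    refine tendsto_tsum_of_dominated_convergence (bound := fun d => 1 / (d : ℝ) ^ 2)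
      (Real.summable_one_div_nat_pow.mpr one_lt_two) (fun d => ?_) ?_
    · rcases Nat.eq_zero_or_pos d with rfl | hd0
      · simpa [hFdef] using tendsto_const_nhds (x := (0:ℝ)) (f := atTop (α := ℕ))
      · have hL0 : 0 < Nat.lcm m d := hL d hd0
        have hLR : (0 : ℝ) < Nat.lcm m d := by exact_mod_cast hL0
        have hdR : (0 : ℝ) < d := by exact_mod_cast hd0
        have h1 : Tendsto (fun N : ℕ => (N : ℝ) / Nat.lcm m d) atTop atTop :=
          (tendsto_natCast_atTop_atTop (R := ℝ)).atTop_div_const hLR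
        have h2 : Tendsto (fun N : ℕ =>
            ((⌊(N : ℝ) / Nat.lcm m d⌋₊ : ℕ) : ℝ) / ((N : ℝ) / Nat.lcm m d)) atTop (𝓝 1) :=
          (tendsto_nat_floor_div_atTop (R := ℝ)).comp h1
        have h3 := h2.const_mul ((moebius d : ℝ) / d * (1 / (Nat.lcm m d : ℝ)))
        rw [mul_one] at h3
        rw [show (moebius d : ℝ) / (d * Nat.lcm m d)
            = (moebius d : ℝ) / d * (1 / (Nat.lcm m d : ℝ)) by
          rw [div_mul_div_comm, mul_one]]
        refine Tendsto.congr' ?_ h3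
        filter_upwards [eventually_ge_atTop 1] with N hN
        have hNR : (0 : ℝ) < N := by exact_mod_cast hN
        have hfloor : ((N / Nat.lcm m d : ℕ) : ℝ) = ((⌊(N : ℝ) / Nat.lcm m d⌋₊ : ℕ) : ℝ) := by
          rw [Nat.floor_div_natCast, Nat.floor_natCast]
        simp only [hFdef]
        rw [← hfloor]
        field_simp
    · refine Eventually.of_forall fun N d => ?_
      rcases Nat.eq_zero_or_pos d with rfl | hd0
      · simp [hFdef]
      rcases Nat.eq_zero_or_pos N with rfl | hN0
      · simp only [hFdef]
        simp
      · have hL0 := hL d hd0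
        have hdR : (0 : ℝ) < d := by exact_mod_cast hd0
        have hNR : (0 : ℝ) < N := by exact_mod_cast hN0
        have hxle : (d : ℝ) * ((N / Nat.lcm m d : ℕ) : ℝ) ≤ (N : ℝ) := by
          have h : d * (N / Nat.lcm m d) ≤ N := by
            calc d * (N / Nat.lcm m d) ≤ Nat.lcm m d * (N / Nat.lcm m d) :=
                  Nat.mul_le_mul_right _ (hdL d hd0)
              _ ≤ N := by rw [mul_comm]; exact Nat.div_mul_le_self N _
          exact_mod_cast h
        have hnorm : ‖F N d‖
            = |(moebius d : ℝ)| / d * ((N / Nat.lcm m d : ℕ) : ℝ) / N := by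
          simp only [hFdef]
          rw [Real.norm_eq_abs, abs_div, abs_mul, abs_div, Nat.abs_cast, Nat.abs_cast,
            Nat.abs_cast]
        rw [hnorm]
        have hx : ((N / Nat.lcm m d : ℕ) : ℝ) / N ≤ 1 / d := by
          rw [div_le_div_iff₀ hNR hdR]
          linarith
        calc |(moebius d : ℝ)| / d * ((N / Nat.lcm m d : ℕ) : ℝ) / N
            = (|(moebius d : ℝ)| / d) * (((N / Nat.lcm m d : ℕ) : ℝ) / N) := by ring
          _ ≤ (1 / d) * (1 / d) := by
              refine mul_le_mul ?_ hx (by positivity) (by positivity)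
              gcongr
              exact abs_moebius_le d
          _ = 1 / (d : ℝ) ^ 2 := by ring
  -- Step 3: combine
  rw [← tsum_const_eval m hm]
  refine Tendsto.congr' ?_ hlim
  filter_upwards [eventually_gt_atTop 0] with N hN
  exact (hmain N hN).symm
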